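/- Let n, k ∈ ℕ with k ≥ 1, let R ∈ (0,1), and let y = (y_γ)_{γ∈ℕ^n_{2k}} be a real sequence with y₀ = 1 such that the moment matrix M_k(y) is positive semidefinite and the localizing matrix M_{k−1}((R − ‖x‖₂²)·y) is positive semidefinite, where ‖x‖₂² = x₁² + ⋯ + xₙ². Then tr(M_k(y)) ≤ 1/(1 − R), and moreover Σ_{γ∈ℕ^n_{2k}} |y_γ| ≤ √L / (1 − R), where L = (1/2)·binom(n+k, n)·(binom(n+k, n) + 1). -/

import Mathlib

open Matrix BigOperators

/-- The set `ℕ^n_k` of multi-indices `α ∈ ℕ^n` with `|α| = α₁ + ⋯ + αₙ ≤ k`. -/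
abbrev MIdx (n k : ℕ) : Type := {α : Fin n → ℕ // ∑ i, α i ≤ k}

noncomputable instance (n k : ℕ) : Fintype (MIdx n k) :=
  Fintype.ofInjective
    (fun a : MIdx n k => fun i : Fin n =>
      (⟨a.1 i, Nat.lt_succ_of_le
        ((Finset.single_le_sum (fun j _ => Nat.zero_le (a.1 j)) (Finset.mem_univ i)).trans
          a.2)⟩ : Fin (k + 1)))
    (fun a b h => Subtype.ext (funext fun i => congrArg Fin.val (congrFun h i)))

/-- The moment matrix `M_k(y)`, indexed by `ℕ^n_k`, with `(α,β)` entry `y_{α+β}`. -/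
noncomputable def momMatY (n k : ℕ) (y : (Fin n → ℕ) → ℝ) :
    Matrix (MIdx n k) (MIdx n k) ℝ :=
  Matrix.of fun α β => y (fun j => α.1 j + β.1 j)

/-- The localizing matrix `M_{k−1}((R − ‖x‖₂²)·y)`, indexed by `ℕ^n_{k−1}`, with
`(α,β)` entry `R·y_{α+β} − Σᵢ y_{α+β+2eᵢ}`. -/
noncomputable def locBall (n k : ℕ) (R : ℝ) (y : (Fin n → ℕ) → ℝ) :
    Matrix (MIdx n (k - 1)) (MIdx n (k - 1)) ℝ :=
  Matrix.of fun α β =>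
    R * y (fun j => α.1 j + β.1 j)
      - ∑ i : Fin n, y (fun j => α.1 j + β.1 j + if j = i then 2 else 0)

section auxlemmas

variable {ι : Type*} [Fintype ι] [DecidableEq ι] {M : Matrix ι ι ℝ}

lemma psd_diag (h : M.PosSemidef) (i : ι) : 0 ≤ M i i := by
  have := h.dotProduct_mulVec_nonneg (Pi.single i 1)
  simpa [dotProduct, mulVec, Pi.single_apply, Finset.sum_ite_eq'] using this

lemma psd_entry_sq (h : M.PosSemidef) (i j : ι) : M i j ^ 2 ≤ M i i * M j j := by
  have hsym : M j i = M i j := by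
    have := congrFun (congrFun h.1 i) j
    simpa [Matrix.conjTranspose_apply] using this
  have key : ∀ t : ℝ, 0 ≤ M i i * (t * t) + (2 * M i j) * t + M j j := by
    intro t
    have := h.dotProduct_mulVec_nonneg (t • (Pi.single i 1 : ι → ℝ) + Pi.single j 1)
    have e : (t • (Pi.single i 1 : ι → ℝ) + Pi.single j 1) ⬝ᵥ
        (M *ᵥ (t • (Pi.single i 1 : ι → ℝ) + Pi.single j 1))
        = M i i * (t * t) + (2 * M i j) * t + M j j := by
      simp [dotProduct, mulVec, Pi.single_apply, Finset.sum_ite_eq', mul_add, add_mul,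
        Finset.sum_add_distrib, hsym]
      ring
    simp only [star_trivial] at this
    rw [e] at this
    exact this
  have hd := discrim_le_zero key
  rw [discrim] at hd
  nlinarith [hd]

lemma card_finsum {α β : Type*} [DecidableEq α] {s : Finset β} (f : β → Multiset α) :
    Multiset.card (∑ i ∈ s, f i) = ∑ i ∈ s, Multiset.card (f i) := by
  classical
  induction s using Finset.induction with
  | empty => simp
  | insert _ _ h ih => simp [Finset.sum_insert h, ih]

lemma sum_count_univ {n : ℕ} {m : Multiset (Fin (n+1))} :
    ∑ j : Fin (n+1), m.count j = Multiset.card m := by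
  rw [← Multiset.toFinset_sum_count_eq]
  exact (Finset.sum_subset (Finset.subset_univ _) fun x _ hx =>
    Multiset.count_eq_zero_of_notMem (by simpa using hx)).symm

noncomputable def midxEquivSym (n k : ℕ) : MIdx n k ≃ Sym (Fin (n+1)) k where
  toFun a := ⟨(k - ∑ i, a.1 i) • ({0} : Multiset (Fin (n+1)))
      + ∑ i : Fin n, a.1 i • ({Fin.succ i} : Multiset (Fin (n+1))), by
    simp only [Multiset.card_add, Multiset.card_nsmul, card_finsum, Multiset.card_singleton,
      mul_one]
    exact Nat.sub_add_cancel a.2⟩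
  invFun m := ⟨fun i => m.1.count i.succ, by
    have h := sum_count_univ (m := m.1)
    rw [Fin.sum_univ_succ, m.2] at h
    show ∑ i : Fin n, m.1.count i.succ ≤ k
    omega⟩
  left_inv a := by
    apply Subtype.ext
    funext i
    simp [Multiset.count_sum', Multiset.count_nsmul, Multiset.count_singleton,
      Fin.succ_inj, Fin.succ_ne_zero, (Fin.succ_ne_zero i).symm, Finset.sum_ite_eq']
  right_inv m := by
    apply Subtype.ext
    ext b
    have h := sum_count_univ (m := m.1)
    rw [Fin.sum_univ_succ] at h
    rw [m.2] at h
    cases b using Fin.cases with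
    | zero =>
        simp [Multiset.count_sum', Multiset.count_nsmul, Multiset.count_singleton,
          fun i : Fin n => (Fin.succ_ne_zero i).symm]
        have h' : Multiset.count 0 (Sym.toMultiset m)
            + ∑ i : Fin n, Multiset.count i.succ (Sym.toMultiset m) = k := h
        omega
    | succ i =>
        simp [Multiset.count_sum', Multiset.count_nsmul, Multiset.count_singleton,
          Fin.succ_inj, Fin.succ_ne_zero, Finset.sum_ite_eq']

lemma card_MIdx (n k : ℕ) : Fintype.card (MIdx n k) = (n + k).choose n := by
  rw [Fintype.card_congr (midxEquivSym n k), Sym.card_sym_eq_choose]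
  simp only [Fintype.card_fin]
  rw [show n + 1 + k - 1 = n + k by omega, ← Nat.choose_symm_add]

lemma exists_le_sum {n : ℕ} (γ : Fin n → ℕ) :
    ∀ m, m ≤ ∑ i, γ i → ∃ β : Fin n → ℕ, (∀ i, β i ≤ γ i) ∧ ∑ i, β i = m := by
  intro m
  induction m with
  | zero => exact fun _ => ⟨0, fun i => Nat.zero_le _, by simp⟩
  | succ m ih =>
    intro hm
    obtain ⟨β, hle, hsum⟩ := ih (by omega)
    have hex : ∃ i, β i < γ i := by
      by_contra hc; push_neg at hc
      have : ∑ i, γ i ≤ ∑ i, β i := Finset.sum_le_sum fun i _ => hc i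
      omega
    obtain ⟨i, hi⟩ := hex
    refine ⟨Function.update β i (β i + 1), fun t => ?_, ?_⟩
    · rcases eq_or_ne t i with rfl | ht
      · rw [Function.update_self]; omega
      · rw [Function.update_of_ne ht]; exact hle t
    · rw [Finset.sum_update_of_mem (Finset.mem_univ i)]
      have h2 := Finset.sum_eq_sum_sdiff_singleton_add (Finset.mem_univ i) β
      omega

end auxlemmas

/-- If `y₀ = 1`, `M_k(y) ⪰ 0` and `M_{k−1}((R − ‖x‖₂²)·y) ⪰ 0` with
`R ∈ (0,1)`, then `tr(M_k(y)) ≤ 1/(1−R)` and `Σ_{γ∈ℕ^n_{2k}} |y_γ| ≤ √L/(1−R)` where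
`L = (1/2)·binom(n+k,n)·(binom(n+k,n)+1)`. -/
theorem stmt12 (n k : ℕ) (hk : 1 ≤ k) (R : ℝ) (hR0 : 0 < R) (hR1 : R < 1)
    (y : (Fin n → ℕ) → ℝ) (hy0 : y 0 = 1)
    (hmom : (momMatY n k y).PosSemidef)
    (hloc : (locBall n k R y).PosSemidef) :
    (momMatY n k y).trace ≤ 1 / (1 - R) ∧
      ∑ γ : MIdx n (2 * k), |y γ.1|
        ≤ Real.sqrt ((1 / 2) * (Nat.choose (n + k) n : ℝ) * ((Nat.choose (n + k) n : ℝ) + 1))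
            / (1 - R) := by
  classical
  have h1R : (0:ℝ) < 1 - R := by linarith
  -- diagonal nonnegativity
  have hdiag : ∀ γ : Fin n → ℕ, ∑ i, γ i ≤ k → 0 ≤ y (fun j => γ j + γ j) := by
    intro γ hγ
    simpa [momMatY] using psd_diag hmom ⟨γ, hγ⟩
  have hlocd : ∀ γ : Fin n → ℕ, ∑ i, γ i ≤ k - 1 →
      ∑ i : Fin n, y (fun j => γ j + γ j + if j = i then 2 else 0)
        ≤ R * y (fun j => γ j + γ j) := by
    intro γ hγ
    have := psd_diag hloc ⟨γ, hγ⟩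
    simp only [locBall, Matrix.of_apply] at this
    linarith
  set S : ℕ → ℝ := fun j => ∑ γ ∈ Finset.Nat.antidiagonalTuple n j, y (fun i => γ i + γ i)
    with hSdef
  have hS0 : S 0 = 1 := by
    show ∑ γ ∈ Finset.Nat.antidiagonalTuple n 0, y (fun i => γ i + γ i) = 1
    rw [Finset.Nat.antidiagonalTuple_zero_right, Finset.sum_singleton]
    exact hy0
  have hSnn : ∀ j, j ≤ k → 0 ≤ S j := by
    intro j hj
    refine Finset.sum_nonneg fun γ hγ => hdiag γ ?_
    rw [Finset.Nat.mem_antidiagonalTuple.mp hγ]; exact hj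
  have hstep : ∀ j, j + 1 ≤ k → S (j + 1) ≤ R * S j := by
    intro j hj
    rcases Nat.eq_zero_or_pos n with hn | hn
    · subst hn
      have : S (j + 1) = 0 := by
        show ∑ γ ∈ Finset.Nat.antidiagonalTuple 0 (j + 1), y (fun i => γ i + γ i) = 0
        rw [Finset.Nat.antidiagonalTuple_zero_succ]; simp
      rw [this]
      exact mul_nonneg hR0.le (hSnn j (by omega))
    · set T := Finset.Nat.antidiagonalTuple n (j + 1) with hT
      set A := Finset.Nat.antidiagonalTuple n j with hA
      set I : (Fin n → ℕ) → Fin n := fun γ =>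
        if h : ∃ t, γ t ≠ 0 then h.choose else ⟨0, hn⟩ with hI
      have hIspec : ∀ γ : Fin n → ℕ, γ ∈ T → γ (I γ) ≠ 0 := by
        intro γ hγ
        have hsum := Finset.Nat.mem_antidiagonalTuple.mp hγ
        have hex : ∃ t, γ t ≠ 0 := by
          by_contra hc; push_neg at hc
          simp [hc] at hsum
        rw [hI]; simp only [dif_pos hex]
        exact hex.choose_spec
      set φ : (Fin n → ℕ) → (Fin n → ℕ) × Fin n := fun γ =>
        (Function.update γ (I γ) (γ (I γ) - 1), I γ) with hφ
      set F : (Fin n → ℕ) × Fin n → ℝ :=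
        fun p => y (fun t => p.1 t + p.1 t + if t = p.2 then 2 else 0) with hF
      have hval : ∀ γ ∈ T, y (fun i => γ i + γ i) = F (φ γ) := by
        intro γ hγ
        have h1 := hIspec γ hγ
        simp only [hφ, hF]
        congr 1
        funext t
        rcases eq_or_ne t (I γ) with rfl | ht
        · simp [Function.update_self]
          omega
        · simp [Function.update_of_ne ht, ht]
      have hsumφ : ∀ γ ∈ T, φ γ ∈ A ×ˢ (Finset.univ : Finset (Fin n)) := by
        intro γ hγ
        have h1 := hIspec γ hγ
        have hsum := Finset.Nat.mem_antidiagonalTuple.mp hγ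
        refine Finset.mem_product.mpr ⟨Finset.Nat.mem_antidiagonalTuple.mpr ?_, Finset.mem_univ _⟩
        show ∑ t, Function.update γ (I γ) (γ (I γ) - 1) t = j
        rw [Finset.sum_update_of_mem (Finset.mem_univ (I γ))]
        have h2 := Finset.sum_eq_sum_sdiff_singleton_add (Finset.mem_univ (I γ)) γ
        omega
      have hrec : ∀ γ ∈ T, γ = Function.update (φ γ).1 (φ γ).2 ((φ γ).1 (φ γ).2 + 1) := by
        intro γ hγ
        have h1 := hIspec γ hγ
        funext t
        rcases eq_or_ne t (I γ) with rfl | ht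
        · simp only [hφ, Function.update_self]
          omega
        · simp [hφ, Function.update_of_ne ht]
      have hinj : ∀ γ₁ ∈ T, ∀ γ₂ ∈ T, φ γ₁ = φ γ₂ → γ₁ = γ₂ := by
        intro γ₁ h₁ γ₂ h₂ he
        rw [hrec γ₁ h₁, hrec γ₂ h₂, he]
      have hFnn : ∀ p ∈ A ×ˢ (Finset.univ : Finset (Fin n)), 0 ≤ F p := by
        intro p hp
        obtain ⟨hp1, _⟩ := Finset.mem_product.mp hp
        have hps := Finset.Nat.mem_antidiagonalTuple.mp hp1
        have he : F p = y (fun t => (p.1 t + if t = p.2 then 1 else 0)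
            + (p.1 t + if t = p.2 then 1 else 0)) := by
          simp only [hF]
          congr 1
          funext t
          by_cases h : t = p.2 <;> simp [h] <;> omega
        rw [he]
        refine hdiag _ ?_
        rw [Finset.sum_add_distrib, hps, Finset.sum_ite_eq' Finset.univ p.2 (fun _ => 1)]
        simp
        omega
      calc S (j + 1) = ∑ γ ∈ T, F (φ γ) := Finset.sum_congr rfl hval
        _ = ∑ p ∈ T.image φ, F p := (Finset.sum_image hinj).symm
        _ ≤ ∑ p ∈ A ×ˢ (Finset.univ : Finset (Fin n)), F p := by
            refine Finset.sum_le_sum_of_subset_of_nonneg ?_ fun p hp _ => hFnn p hp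
            intro p hp
            obtain ⟨γ, hγ, rfl⟩ := Finset.mem_image.mp hp
            exact hsumφ γ hγ
        _ = ∑ γ' ∈ A, ∑ i : Fin n, F (γ', i) := Finset.sum_product _ _ _
        _ ≤ ∑ γ' ∈ A, R * y (fun t => γ' t + γ' t) := by
            refine Finset.sum_le_sum fun γ' hγ' => ?_
            have := Finset.Nat.mem_antidiagonalTuple.mp hγ'
            exact hlocd γ' (by omega)
        _ = R * S j := by rw [← Finset.mul_sum]
  have hpow : ∀ j, j ≤ k → S j ≤ R ^ j := by
    intro j
    induction j with
    | zero => intro _; simp [hS0]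
    | succ j ih =>
      intro hj
      calc S (j + 1) ≤ R * S j := hstep j hj
        _ ≤ R * R ^ j := mul_le_mul_of_nonneg_left (ih (by omega)) hR0.le
        _ = R ^ (j + 1) := (pow_succ' R j).symm
  -- trace identity
  have hdisj : Set.PairwiseDisjoint ↑(Finset.range (k + 1))
      (fun j => Finset.Nat.antidiagonalTuple n j) := by
    intro a _ b _ hab
    refine Finset.disjoint_left.mpr fun γ hγa hγb => hab ?_
    rw [← Finset.Nat.mem_antidiagonalTuple.mp hγa, ← Finset.Nat.mem_antidiagonalTuple.mp hγb]
  have htr : (momMatY n k y).trace = ∑ j ∈ Finset.range (k + 1), S j := by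
    have hmem : ∀ γ : Fin n → ℕ,
        γ ∈ (Finset.range (k + 1)).biUnion (fun j => Finset.Nat.antidiagonalTuple n j)
          ↔ ∑ i, γ i ≤ k := by
      intro γ
      simp only [Finset.mem_biUnion, Finset.mem_range, Finset.Nat.mem_antidiagonalTuple]
      constructor
      · rintro ⟨j, hj, rfl⟩; omega
      · intro h; exact ⟨∑ i, γ i, by omega, rfl⟩
    rw [Matrix.trace]
    have := @Finset.sum_subtype (Fin n → ℕ) ℝ _ (fun x => ∑ i, x i ≤ k)
      (inferInstanceAs (Fintype (MIdx n k)))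
      ((Finset.range (k + 1)).biUnion (fun j => Finset.Nat.antidiagonalTuple n j))
      hmem (fun γ => y (fun i => γ i + γ i))
    calc ∑ α : MIdx n k, (momMatY n k y).diag α
        = ∑ α : MIdx n k, y (fun i => α.1 i + α.1 i) := rfl
      _ = ∑ γ ∈ (Finset.range (k + 1)).biUnion (fun j => Finset.Nat.antidiagonalTuple n j),
            y (fun i => γ i + γ i) := this.symm
      _ = ∑ j ∈ Finset.range (k + 1), S j := Finset.sum_biUnion hdisj
  have htrace_le : (momMatY n k y).trace ≤ 1 / (1 - R) := by
    rw [htr]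
    have h1 : ∑ j ∈ Finset.range (k + 1), S j ≤ ∑ j ∈ Finset.range (k + 1), R ^ j :=
      Finset.sum_le_sum fun j hj => hpow j (by have := Finset.mem_range.mp hj; omega)
    refine h1.trans ?_
    rw [le_div_iff₀ h1R]
    have e2 : (∑ j ∈ Finset.range (k + 1), R ^ j) * (1 - R) = 1 - R ^ (k + 1) := by
      linear_combination -geom_sum_mul R (k + 1)
    rw [e2]
    have := pow_nonneg hR0.le (k + 1)
    linarith
  refine ⟨htrace_le, ?_⟩
  -- Part 2
  have htrnn : 0 ≤ (momMatY n k y).trace := by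
    rw [Matrix.trace]
    exact Finset.sum_nonneg fun α _ => psd_diag hmom α
  have hfro : ∑ α : MIdx n k, ∑ β : MIdx n k, (momMatY n k y α β) ^ 2
      ≤ (momMatY n k y).trace ^ 2 := by
    have e : (momMatY n k y).trace ^ 2
        = ∑ α : MIdx n k, ∑ β : MIdx n k, momMatY n k y α α * momMatY n k y β β := by
      rw [Matrix.trace, sq, Finset.sum_mul_sum]
      rfl
    rw [e]
    exact Finset.sum_le_sum fun α _ => Finset.sum_le_sum fun β _ => psd_entry_sq hmom α β
  have hsplit : ∀ γ : MIdx n (2 * k), ∃ p : MIdx n k × MIdx n k,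
      ∀ j, p.1.1 j + p.2.1 j = γ.1 j := by
    intro γ
    obtain ⟨β, hβle, hβsum⟩ := exists_le_sum γ.1 (∑ i, γ.1 i - k) (Nat.sub_le _ _)
    have hγ2 := γ.2
    have hβk : ∑ i, β i ≤ k := by omega
    have hαsum : ∑ i, (γ.1 i - β i) = ∑ i, γ.1 i - ∑ i, β i :=
      Finset.sum_tsub_distrib Finset.univ fun i _ => hβle i
    refine ⟨⟨⟨fun i => γ.1 i - β i, by rw [hαsum]; omega⟩, ⟨β, hβk⟩⟩, fun j => ?_⟩
    have := hβle j
    show (γ.1 j - β j) + β j = γ.1 j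
    omega
  choose p hp using hsplit
  have hyval : ∀ γ : MIdx n (2 * k), y γ.1 = momMatY n k y (p γ).1 (p γ).2 := by
    intro γ
    simp only [momMatY, Matrix.of_apply]
    congr 1
    exact (funext (hp γ)).symm
  have hpinj : Function.Injective p := by
    intro γ₁ γ₂ h
    apply Subtype.ext; funext j
    rw [← hp γ₁ j, ← hp γ₂ j, h]
  -- card bound
  set C : ℕ := (n + k).choose n with hC
  have hcard2 : (Fintype.card (MIdx n (2 * k)) : ℝ) ≤ (1 / 2) * (C : ℝ) * ((C : ℝ) + 1) := by
    have hinj2 : Function.Injective (fun γ : MIdx n (2 * k) => Sym2.mk (p γ).1 (p γ).2) := by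
      intro γ₁ γ₂ h
      simp only [Sym2.eq_iff] at h
      apply Subtype.ext; funext j
      rcases h with ⟨h1, h2⟩ | ⟨h1, h2⟩
      · rw [← hp γ₁ j, ← hp γ₂ j, h1, h2]
      · rw [← hp γ₁ j, ← hp γ₂ j, h1, h2, Nat.add_comm]
    have h1 := Fintype.card_le_of_injective _ hinj2
    rw [Sym2.card, card_MIdx n k, ← hC] at h1
    have h2 : 2 * ((C + 1).choose 2) = C * (C + 1) := by
      rw [Nat.choose_two_right]
      simp only [Nat.add_sub_cancel]
      rw [Nat.mul_comm (C + 1) C]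
      exact Nat.mul_div_cancel' (even_iff_two_dvd.mp (Nat.even_mul_succ_self C))
    have h3 : (Fintype.card (MIdx n (2 * k)) : ℝ) ≤ ((C + 1).choose 2 : ℝ) :=
      Nat.cast_le.mpr h1
    have h4 : (2 : ℝ) * ((C + 1).choose 2 : ℝ) = (C : ℝ) * ((C : ℝ) + 1) := by
      exact_mod_cast congrArg (Nat.cast : ℕ → ℝ) h2
    linarith
  -- Cauchy–Schwarz
  set T : ℝ := ∑ γ : MIdx n (2 * k), |y γ.1| with hTdef
  have hTnn : 0 ≤ T := Finset.sum_nonneg fun γ _ => abs_nonneg _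
  have hcs : T ^ 2 ≤ (Fintype.card (MIdx n (2 * k)) : ℝ) * ∑ γ : MIdx n (2 * k), (y γ.1) ^ 2 := by
    have h := sq_sum_le_card_mul_sum_sq (s := (Finset.univ : Finset (MIdx n (2 * k))))
      (f := fun γ => |y γ.1|)
    simpa [sq_abs, Finset.card_univ] using h
  have hsum2 : ∑ γ : MIdx n (2 * k), (y γ.1) ^ 2
      ≤ ∑ α : MIdx n k, ∑ β : MIdx n k, (momMatY n k y α β) ^ 2 := by
    have e1 : ∑ γ : MIdx n (2 * k), (y γ.1) ^ 2
        = ∑ q ∈ Finset.univ.image p, (momMatY n k y q.1 q.2) ^ 2 := by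
      rw [Finset.sum_image fun a _ b _ h => hpinj h]
      exact Finset.sum_congr rfl fun γ _ => by rw [hyval γ]
    rw [e1]
    calc ∑ q ∈ Finset.univ.image p, (momMatY n k y q.1 q.2) ^ 2
        ≤ ∑ q : MIdx n k × MIdx n k, (momMatY n k y q.1 q.2) ^ 2 :=
          Finset.sum_le_sum_of_subset_of_nonneg (Finset.subset_univ _) fun q _ _ => sq_nonneg _
      _ = ∑ α : MIdx n k, ∑ β : MIdx n k, (momMatY n k y α β) ^ 2 :=
          Fintype.sum_prod_type (f := fun q : MIdx n k × MIdx n k => (momMatY n k y q.1 q.2) ^ 2)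
  set L : ℝ := (1 / 2) * (C : ℝ) * ((C : ℝ) + 1) with hL
  have hLnn : 0 ≤ L := by positivity
  have hfin : T ^ 2 ≤ L * ((momMatY n k y).trace) ^ 2 := by
    have c1 : T ^ 2 ≤ (Fintype.card (MIdx n (2 * k)) : ℝ) * ((momMatY n k y).trace) ^ 2 :=
      hcs.trans (mul_le_mul_of_nonneg_left (hsum2.trans hfro) (Nat.cast_nonneg _))
    exact c1.trans (mul_le_mul_of_nonneg_right hcard2 (sq_nonneg _))
  have hTle : T ≤ Real.sqrt L * (momMatY n k y).trace := by
    have h5 : T ≤ Real.sqrt (L * ((momMatY n k y).trace) ^ 2) := by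
      rw [← Real.sqrt_sq hTnn]
      exact Real.sqrt_le_sqrt hfin
    rwa [Real.sqrt_mul hLnn, Real.sqrt_sq htrnn] at h5
  calc T ≤ Real.sqrt L * (momMatY n k y).trace := hTle
    _ ≤ Real.sqrt L * (1 / (1 - R)) :=
        mul_le_mul_of_nonneg_left htrace_le (Real.sqrt_nonneg _)
    _ = Real.sqrt L / (1 - R) := by rw [mul_one_div]
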